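/- Let n, d be positive integers and let w^1,…,w^d ∈ ℤ^{n×n} be entrywise nonnegative weight matrices, and let 1 ≤ p ≤ ∞. Then there exists a permutation σ̂ of {1,…,n} whose projection w·x_{σ̂} is an extreme point of the multiobjective polytope Π_w^n and which satisfies ‖w·x_{σ̂}‖_p ≤ d · ‖w·x_π‖_p for every permutation π of {1,…,n}; that is, σ̂ is a d-approximative solution to minimizing ‖w·x‖_p over perfect matchings. -/

import Mathlib

/-- The Birkhoff polytope: n×n doubly stochastic real matrices. -/
def birkhoff (n : ℕ) : Set (Matrix (Fin n) (Fin n) ℝ) :=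
  {x | (∀ i j, 0 ≤ x i j) ∧ (∀ i, ∑ j, x i j = 1) ∧ (∀ j, ∑ i, x i j = 1)}

/-- The permutation matrix of a permutation σ: entry (i,j) is 1 iff j = σ i. -/
def permMat (n : ℕ) (σ : Equiv.Perm (Fin n)) : Matrix (Fin n) (Fin n) ℝ :=
  fun i j => if j = σ i then 1 else 0

/-- The projection x ↦ (w¹·x, …, w^d·x). -/
def proj {n d : ℕ} (w : Fin d → Matrix (Fin n) (Fin n) ℤ)
    (x : Matrix (Fin n) (Fin n) ℝ) : Fin d → ℝ :=
  fun k => ∑ i, ∑ j, (w k i j : ℝ) * x i j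

/-- The ℓ_p norm on ℝ^d for 1 ≤ p ≤ ∞. -/
noncomputable def lpNorm {d : ℕ} (p : ENNReal) (y : Fin d → ℝ) : ℝ :=
  if p = ⊤ then ⨆ k, |y k| else (∑ k, |y k| ^ p.toReal) ^ (1 / p.toReal)

section Aux
open Finset Set

lemma real_add_rpow {r : ℝ} (hr : 1 ≤ r) {a b : ℝ} (ha : 0 ≤ a) (hb : 0 ≤ b) :
    a ^ r + b ^ r ≤ (a + b) ^ r := by
  have := NNReal.add_rpow_le_rpow_add ⟨a, ha⟩ ⟨b, hb⟩ hr
  have h2 := NNReal.coe_le_coe.2 this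
  exact h2

lemma sum_rpow_le_rpow_sum' {ι : Type*} (s : Finset ι) {r : ℝ} (hr : 1 ≤ r)
    (f : ι → ℝ) (hf : ∀ i, 0 ≤ f i) :
    ∑ i ∈ s, f i ^ r ≤ (∑ i ∈ s, f i) ^ r := by
  classical
  induction s using Finset.induction with
  | empty => simp [Real.zero_rpow (by linarith : r ≠ 0)]
  | @insert a s ha ih =>
    rw [Finset.sum_insert ha, Finset.sum_insert ha]
    calc f a ^ r + ∑ i ∈ s, f i ^ r ≤ f a ^ r + (∑ i ∈ s, f i) ^ r := by linarith
    _ ≤ (f a + ∑ i ∈ s, f i) ^ r :=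
      real_add_rpow hr (hf a) (Finset.sum_nonneg fun i _ => hf i)

lemma lpNorm_le_sum {d : ℕ} (hd : 0 < d) {p : ENNReal} (hp : 1 ≤ p)
    (y : Fin d → ℝ) (hy : ∀ k, 0 ≤ y k) :
    lpNorm p y ≤ ∑ k, y k := by
  haveI : Nonempty (Fin d) := ⟨⟨0, hd⟩⟩
  unfold lpNorm
  split_ifs with htop
  · refine ciSup_le fun k => ?_
    rw [abs_of_nonneg (hy k)]
    exact Finset.single_le_sum (fun i _ => hy i) (Finset.mem_univ k)
  · have hr : (1:ℝ) ≤ p.toReal := by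
      have := ENNReal.toReal_mono htop hp
      simpa using this
    have h0 : (0:ℝ) < p.toReal := by linarith
    have h1 : ∑ k, |y k| ^ p.toReal = ∑ k, y k ^ p.toReal := by
      refine Finset.sum_congr rfl fun k _ => by rw [abs_of_nonneg (hy k)]
    rw [h1]
    have h2 : ∑ k, y k ^ p.toReal ≤ (∑ k, y k) ^ p.toReal :=
      sum_rpow_le_rpow_sum' Finset.univ hr y hy
    calc (∑ k, y k ^ p.toReal) ^ (1 / p.toReal)
        ≤ ((∑ k, y k) ^ p.toReal) ^ (1 / p.toReal) :=
          Real.rpow_le_rpow (Finset.sum_nonneg fun k _ =>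
            Real.rpow_nonneg (hy k) _) h2 (by positivity)
      _ = ∑ k, y k := by
          rw [← Real.rpow_mul (Finset.sum_nonneg fun k _ => hy k),
            mul_one_div_cancel (ne_of_gt h0), Real.rpow_one]

lemma sum_le_card_mul_lpNorm {d : ℕ} (hd : 0 < d) {p : ENNReal} (hp : 1 ≤ p)
    (y : Fin d → ℝ) (hy : ∀ k, 0 ≤ y k) :
    ∑ k, y k ≤ (d : ℝ) * lpNorm p y := by
  haveI : Nonempty (Fin d) := ⟨⟨0, hd⟩⟩
  have key : ∀ k, y k ≤ lpNorm p y := by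
    intro k
    unfold lpNorm
    split_ifs with htop
    · calc y k = |y k| := (abs_of_nonneg (hy k)).symm
        _ ≤ ⨆ j, |y j| := le_ciSup (Set.Finite.bddAbove (Set.finite_range fun j => |y j|)) k
    · have hr : (1:ℝ) ≤ p.toReal := by
        have := ENNReal.toReal_mono htop hp
        simpa using this
      have h0 : (0:ℝ) < p.toReal := by linarith
      have h1 : y k = (y k ^ p.toReal) ^ (1 / p.toReal) := by
        rw [← Real.rpow_mul (hy k), mul_one_div_cancel (ne_of_gt h0), Real.rpow_one]
      rw [h1]
      refine Real.rpow_le_rpow (Real.rpow_nonneg (hy k) _) ?_ (by positivity)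
      refine le_trans ?_ (Finset.single_le_sum (f := fun j => |y j| ^ p.toReal)
        (fun i _ => Real.rpow_nonneg (abs_nonneg _) _) (Finset.mem_univ k))
      simp [abs_of_nonneg (hy k)]
  calc ∑ k, y k ≤ ∑ _k : Fin d, lpNorm p y := Finset.sum_le_sum fun k _ => key k
    _ = (d : ℝ) * lpNorm p y := by simp [Finset.sum_const, nsmul_eq_mul]

/-- `proj` as a linear map. -/
def projL {n d : ℕ} (w : Fin d → Matrix (Fin n) (Fin n) ℤ) :
    Matrix (Fin n) (Fin n) ℝ →ₗ[ℝ] (Fin d → ℝ) where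
  toFun := proj w
  map_add' x y := by
    funext k
    simp [proj, mul_add, Finset.sum_add_distrib]
  map_smul' c x := by
    funext k
    simp [proj, Finset.mul_sum, mul_left_comm]

lemma permMat_eq_permMatrix (n : ℕ) (σ : Equiv.Perm (Fin n)) :
    permMat n σ = σ.permMatrix ℝ := by
  ext i j
  simp [permMat, Equiv.Perm.permMatrix, PEquiv.toMatrix_apply, Equiv.toPEquiv_apply, eq_comm]

lemma birkhoff_eq (n : ℕ) : birkhoff n = (doublyStochastic ℝ (Fin n) : Set _) := by
  ext M
  rw [SetLike.mem_coe, mem_doublyStochastic_iff_sum]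
  rfl

lemma image_birkhoff {n d : ℕ} (w : Fin d → Matrix (Fin n) (Fin n) ℤ) :
    proj w '' birkhoff n =
      convexHull ℝ (Set.range fun σ : Equiv.Perm (Fin n) => proj w (permMat n σ)) := by
  have h1 : proj w '' birkhoff n = projL w '' (convexHull ℝ
      {σ.permMatrix ℝ | σ : Equiv.Perm (Fin n)}) := by
    rw [birkhoff_eq, doublyStochastic_eq_convexHull_permMatrix]
    rfl
  rw [h1, LinearMap.image_convexHull]
  congr 1
  ext y
  constructor
  · rintro ⟨x, ⟨σ, rfl⟩, rfl⟩
    exact ⟨σ, by show proj w (permMat n σ) = _; rw [permMat_eq_permMatrix]; rfl⟩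
  · rintro ⟨σ, rfl⟩
    exact ⟨σ.permMatrix ℝ, ⟨σ, rfl⟩,
      by show projL w _ = proj w (permMat n σ); rw [permMat_eq_permMatrix]; rfl⟩

/-- The negated coordinate-sum as a continuous linear map. -/
noncomputable def negSum (d : ℕ) : (Fin d → ℝ) →L[ℝ] ℝ :=
  LinearMap.toContinuousLinearMap
    { toFun := fun y => -∑ k, y k
      map_add' := fun x y => by simp [Finset.sum_add_distrib]; ring
      map_smul' := fun c x => by simp [Finset.mul_sum] }

lemma negSum_apply {d : ℕ} (y : Fin d → ℝ) : negSum d y = -∑ k, y k := rfl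

lemma proj_nonneg {n d : ℕ} (w : Fin d → Matrix (Fin n) (Fin n) ℤ)
    (hw : ∀ k i j, 0 ≤ w k i j) (σ : Equiv.Perm (Fin n)) (k : Fin d) :
    0 ≤ proj w (permMat n σ) k := by
  refine Finset.sum_nonneg fun i _ => Finset.sum_nonneg fun j _ => ?_
  refine mul_nonneg (by exact_mod_cast hw k i j) ?_
  unfold permMat
  split_ifs <;> norm_num

end Aux

theorem min_lpNorm_d_approx (n d : ℕ) (hn : 0 < n) (hd : 0 < d)
    (p : ENNReal) (hp : 1 ≤ p)
    (w : Fin d → Matrix (Fin n) (Fin n) ℤ) (hw : ∀ k i j, 0 ≤ w k i j) :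
    ∃ σ : Equiv.Perm (Fin n),
      proj w (permMat n σ) ∈ Set.extremePoints ℝ (proj w '' birkhoff n) ∧
      ∀ π : Equiv.Perm (Fin n),
        lpNorm p (proj w (permMat n σ)) ≤ (d : ℝ) * lpNorm p (proj w (permMat n π)) := by
  classical
  set S : Set (Fin d → ℝ) :=
    Set.range (fun σ : Equiv.Perm (Fin n) => proj w (permMat n σ)) with hSdef
  have hSfin : S.Finite := Set.finite_range _
  have hSne : S.Nonempty := ⟨_, ⟨1, rfl⟩⟩
  set P : Set (Fin d → ℝ) := convexHull ℝ S with hPdef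
  have hPcomp : IsCompact P := hSfin.isCompact_convexHull ℝ
  have hPne : P.Nonempty := hSne.mono (subset_convexHull ℝ S)
  have himg : proj w '' birkhoff n = P := image_birkhoff w
  set l := negSum d with hl
  obtain ⟨x₀, hx₀P, hx₀max⟩ := hPcomp.exists_isMaxOn hPne l.continuous.continuousOn
  set F : Set (Fin d → ℝ) := l.toExposed P with hFdef
  have hFexp : IsExposed ℝ P F := ContinuousLinearMap.toExposed.isExposed
  have hFne : F.Nonempty := ⟨x₀, hx₀P, fun y hy => hx₀max hy⟩
  have hC : IsClosed (⋂ y ∈ P, {x : Fin d → ℝ | l y ≤ l x}) :=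
    isClosed_biInter fun y _ => isClosed_le continuous_const l.continuous
  have hFeq : F = P ∩ ⋂ y ∈ P, {x : Fin d → ℝ | l y ≤ l x} := by
    ext x
    simp [hFdef, ContinuousLinearMap.toExposed, Set.mem_iInter₂]
  have hFcomp : IsCompact F := hFeq ▸ hPcomp.inter_right hC
  obtain ⟨z, hz⟩ := hFcomp.extremePoints_nonempty hFne
  have hzP : z ∈ P.extremePoints ℝ :=
    hFexp.isExtreme.extremePoints_subset_extremePoints hz
  have hzS : z ∈ S := extremePoints_convexHull_subset hzP
  obtain ⟨σ, hσ⟩ := hzS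
  have hσ' : proj w (permMat n σ) = z := hσ
  refine ⟨σ, ?_, ?_⟩
  · rw [himg]
    exact hσ' ▸ hzP
  · intro π
    have hzF : z ∈ F := hz.1
    have hπP : proj w (permMat n π) ∈ P := subset_convexHull ℝ S ⟨π, rfl⟩
    have hlmax : l (proj w (permMat n π)) ≤ l z := hzF.2 _ hπP
    have hsum : ∑ k, z k ≤ ∑ k, proj w (permMat n π) k := by
      rw [negSum_apply, negSum_apply] at hlmax
      linarith
    have hznn : ∀ k, 0 ≤ z k := fun k => hσ' ▸ proj_nonneg w hw σ k
    calc lpNorm p (proj w (permMat n σ)) = lpNorm p z := by rw [hσ']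
      _ ≤ ∑ k, z k := lpNorm_le_sum hd hp z hznn
      _ ≤ ∑ k, proj w (permMat n π) k := hsum
      _ ≤ (d : ℝ) * lpNorm p (proj w (permMat n π)) :=
          sum_le_card_mul_lpNorm hd hp _ (proj_nonneg w hw π)
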